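/- Let a₁, …, a_m be pairwise distinct real numbers and let I ⊆ ℝ be a nonempty open interval such that |E − a_j| < 2 for every E ∈ I and every j = 1, …, m. For E ∈ I set φ_j(E) = arccos((E − a_j)/2). Then for every nonzero integer vector w = (w₁,…,w_m) ∈ ℤ^m, the function E ↦ ∑_{j=1}^m w_j·φ_j(E) is not constant on I. -/

import Mathlib

open Real Filter Set

/-- No nonzero integer combination of the phase functions
`φ_j(E) = arccos((E − a_j)/2)` is constant on the interval `I`. -/
theorem stmt_5 {m : ℕ} (a : Fin m → ℝ) (ha : Function.Injective a)
    (lo hi : ℝ) (hlohi : lo < hi)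
    (hI : ∀ E ∈ Set.Ioo lo hi, ∀ j, |E - a j| < 2)
    (w : Fin m → ℤ) (hw : w ≠ 0) :
    ¬ (∀ E₁ ∈ Set.Ioo lo hi, ∀ E₂ ∈ Set.Ioo lo hi,
        (∑ j, (w j : ℝ) * Real.arccos ((E₁ - a j) / 2)) =
        (∑ j, (w j : ℝ) * Real.arccos ((E₂ - a j) / 2))) := by
  intro hconst
  classical
  -- the support of `w`
  set s : Finset (Fin m) := Finset.univ.filter (fun j => w j ≠ 0) with hs_def
  have hs : s.Nonempty := by
    obtain ⟨j, hj⟩ := Function.ne_iff.1 hw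
    refine ⟨j, Finset.mem_filter.2 ⟨Finset.mem_univ _, fun h => hj ?_⟩⟩
    simp [h]
  have hws : ∀ j ∈ s, w j ≠ 0 := fun j hj => by
    simpa [hs_def] using hj
  obtain ⟨j₀, hj₀s, hj₀min⟩ := s.exists_min_image a hs
  obtain ⟨jA, hjAs, hjAmax⟩ := s.exists_max_image a hs
  set B := a j₀ with hB_def
  set A := a jA with hA_def
  set E₀ := (lo + hi) / 2 with hE₀_def
  have hE₀ : E₀ ∈ Set.Ioo lo hi := ⟨by simp only [hE₀_def]; linarith, by simp only [hE₀_def]; linarith⟩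
  have hIsub : ∀ E ∈ Set.Ioo lo hi, A - 2 < E ∧ E < B + 2 := by
    intro E hE
    have h1 := abs_lt.1 (hI E hE jA)
    have h2 := abs_lt.1 (hI E hE j₀)
    exact ⟨by linarith, by linarith⟩
  have hAB : A - 2 < B + 2 := by
    have := hIsub E₀ hE₀
    linarith [this.1, this.2]
  have hpos : ∀ j ∈ s, ∀ x ∈ Set.Ioo (A - 2) (B + 2), 0 < 4 - (x - a j) ^ 2 := by
    intro j hj x hx
    have h1 : a j ≤ A := hjAmax j hj
    have h2 : B ≤ a j := hj₀min j hj
    nlinarith [hx.1, hx.2]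
  -- the derivative function
  set G : ℝ → ℝ := fun x => ∑ j ∈ s, (w j : ℝ) * (Real.sqrt (4 - (x - a j) ^ 2))⁻¹ with hG_def
  -- Step 1: G vanishes on I
  have hG0 : ∀ E ∈ Set.Ioo lo hi, G E = 0 := by
    intro E hE
    have hderiv : HasDerivAt (fun x => ∑ j, (w j : ℝ) * Real.arccos ((x - a j) / 2))
        (∑ j, (w j : ℝ) * (-(1 / Real.sqrt (1 - ((E - a j) / 2) ^ 2)) * (1 / 2))) E := by
      apply HasDerivAt.fun_sum
      intro j _
      have hja := abs_lt.1 (hI E hE j)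
      have h₁ : (E - a j) / 2 ≠ -1 := by intro h; rw [div_eq_iff (by norm_num : (2:ℝ) ≠ 0)] at h; linarith [hja.1]
      have h₂ : (E - a j) / 2 ≠ 1 := by intro h; rw [div_eq_iff (by norm_num : (2:ℝ) ≠ 0)] at h; linarith [hja.2]
      have hinner : HasDerivAt (fun x : ℝ => (x - a j) / 2) (1 / 2) E := by
        simpa using ((hasDerivAt_id E).sub_const (a j)).div_const 2
      have houter := Real.hasDerivAt_arccos h₁ h₂
      have := (houter.comp E hinner).const_mul ((w j : ℝ))
      simpa [Function.comp] using this
    have hconst' : HasDerivAt (fun x => ∑ j, (w j : ℝ) * Real.arccos ((x - a j) / 2))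
        0 E := by
      apply (hasDerivAt_const E (∑ j, (w j : ℝ) * Real.arccos ((E₀ - a j) / 2))).congr_of_eventuallyEq
      filter_upwards [isOpen_Ioo.mem_nhds hE] with x hx
      exact hconst x hx E₀ hE₀
    have hzero := hderiv.unique hconst'
    have hterm : ∀ j : Fin m,
        (w j : ℝ) * (-(1 / Real.sqrt (1 - ((E - a j) / 2) ^ 2)) * (1 / 2))
          = -((w j : ℝ) * (Real.sqrt (4 - (E - a j) ^ 2))⁻¹) := by
      intro j
      have hja := abs_lt.1 (hI E hE j)
      have hu : 0 < 4 - (E - a j) ^ 2 := by nlinarith [hja.1, hja.2]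
      have hsq : Real.sqrt (1 - ((E - a j) / 2) ^ 2) = Real.sqrt (4 - (E - a j) ^ 2) / 2 := by
        rw [show (1 : ℝ) - ((E - a j) / 2) ^ 2 = (4 - (E - a j) ^ 2) / 2 ^ 2 by ring,
          Real.sqrt_div hu.le, Real.sqrt_sq (by norm_num : (0:ℝ) ≤ 2)]
      have hsqrt_ne : Real.sqrt (4 - (E - a j) ^ 2) ≠ 0 := (Real.sqrt_pos.2 hu).ne'
      rw [hsq]
      field_simp
    rw [Finset.sum_congr rfl (fun j _ => hterm j), Finset.sum_neg_distrib, neg_eq_zero] at hzero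
    have hsum_eq : ∑ j ∈ s, (w j : ℝ) * (Real.sqrt (4 - (E - a j) ^ 2))⁻¹
        = ∑ j, (w j : ℝ) * (Real.sqrt (4 - (E - a j) ^ 2))⁻¹ := by
      rw [hs_def]
      exact Finset.sum_filter_of_ne (fun x _ hfx h0 => hfx (by simp [h0]))
    show ∑ j ∈ s, (w j : ℝ) * (Real.sqrt (4 - (E - a j) ^ 2))⁻¹ = 0
    rw [hsum_eq, hzero]
  -- Step 2: identity theorem: G vanishes on the whole strip interval
  set fC : ℂ → ℂ := fun z => ∑ j ∈ s, (w j : ℂ) * ((4 : ℂ) - (z - (a j : ℂ)) ^ 2) ^ (-(1/2) : ℂ)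
    with hfC_def
  set g : ℝ → ℝ := fun x => (fC (x : ℂ)).re with hg_def
  have hfC_real : ∀ x ∈ Set.Ioo (A - 2) (B + 2), fC (x : ℂ) = ((G x : ℝ) : ℂ) := by
    intro x hx
    rw [hfC_def, hG_def]
    push_cast [Complex.ofReal_sum]
    apply Finset.sum_congr rfl
    intro j hj
    have hu : 0 < 4 - (x - a j) ^ 2 := hpos j hj x hx
    have hcast : (4 : ℂ) - ((x : ℂ) - (a j : ℂ)) ^ 2 = ((4 - (x - a j) ^ 2 : ℝ) : ℂ) := by
      push_cast; ring
    rw [hcast]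
    congr 1
    rw [show (-(1/2) : ℂ) = ((-(1/2) : ℝ) : ℂ) by norm_num,
      ← Complex.ofReal_cpow hu.le, Real.rpow_neg hu.le, ← Real.sqrt_eq_rpow,
      Complex.ofReal_inv]
  have hg_analytic : AnalyticOnNhd ℝ g (Set.Ioo (A - 2) (B + 2)) := by
    intro x hx
    have hfCa : AnalyticAt ℂ fC (x : ℂ) := by
      apply Finset.analyticAt_fun_sum
      intro j hj
      have hslit : (4 : ℂ) - ((x : ℂ) - (a j : ℂ)) ^ 2 ∈ Complex.slitPlane := by
        rw [show (4 : ℂ) - ((x : ℂ) - (a j : ℂ)) ^ 2 = ((4 - (x - a j) ^ 2 : ℝ) : ℂ) by push_cast; ring]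
        exact Complex.ofReal_mem_slitPlane.2 (hpos j hj x hx)
      exact analyticAt_const.mul
        ((analyticAt_const.sub ((analyticAt_id.sub analyticAt_const).pow 2)).cpow
          analyticAt_const hslit)
    have h1 : AnalyticAt ℝ (fun t : ℝ => (t : ℂ)) x := Complex.ofRealCLM.analyticAt x
    have h2 : AnalyticAt ℝ fC (x : ℂ) := hfCa.restrictScalars
    have h3 : AnalyticAt ℝ Complex.re (fC (x : ℂ)) := Complex.reCLM.analyticAt _
    have := (h3.comp h2).comp h1
    exact this
  have hg_zero : Set.EqOn g 0 (Set.Ioo (A - 2) (B + 2)) := by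
    apply hg_analytic.eqOn_zero_of_preconnected_of_eventuallyEq_zero
      isPreconnected_Ioo ⟨(hIsub E₀ hE₀).1, (hIsub E₀ hE₀).2⟩
    filter_upwards [isOpen_Ioo.mem_nhds hE₀] with x hx
    have hx' : x ∈ Set.Ioo (A - 2) (B + 2) := ⟨(hIsub x hx).1, (hIsub x hx).2⟩
    simp only [hg_def, hfC_real x hx', Complex.ofReal_re, hG0 x hx, Pi.zero_apply]
  have hGstrip : ∀ x ∈ Set.Ioo (A - 2) (B + 2), G x = 0 := by
    intro x hx
    have := hg_zero hx
    simp only [hg_def, hfC_real x hx, Complex.ofReal_re, Pi.zero_apply] at this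
    exact this
  -- Step 3: blow-up at B + 2 gives a contradiction
  set l : Filter ℝ := nhdsWithin (B + 2) (Set.Iio (B + 2)) with hl_def
  have hmem_strip : Set.Ioo (A - 2) (B + 2) ∈ l :=
    Ioo_mem_nhdsLT_of_mem ⟨hAB, le_refl _⟩
  have hG0' : ∀ᶠ x in l, G x = 0 := by
    filter_upwards [hmem_strip] with x hx using hGstrip x hx
  set i : ℝ → ℝ := fun x => (Real.sqrt (4 - (x - B) ^ 2))⁻¹ with hi_def
  -- base tends to 0 from above
  have hbase : Filter.Tendsto (fun x : ℝ => 4 - (x - B) ^ 2) l (nhdsWithin 0 (Set.Ioi 0)) := by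
    apply tendsto_nhdsWithin_of_tendsto_nhds_of_eventually_within
    · have hc : Continuous (fun x : ℝ => 4 - (x - B) ^ 2) :=
        continuous_const.sub ((continuous_id.sub continuous_const).pow 2)
      have h0 : (4 : ℝ) - ((B + 2) - B) ^ 2 = 0 := by ring
      have := (hc.tendsto (B + 2)).mono_left (nhdsWithin_le_nhds (s := Set.Iio (B + 2)))
      rwa [h0] at this
    · have hm : Set.Ioo B (B + 2) ∈ l := Ioo_mem_nhdsLT_of_mem ⟨by linarith, le_refl _⟩
      filter_upwards [hm] with x hx
      have := hx.1; have := hx.2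
      show (0:ℝ) < 4 - (x - B) ^ 2
      nlinarith
  have hsqrt : Filter.Tendsto (fun x : ℝ => Real.sqrt (4 - (x - B) ^ 2)) l
      (nhdsWithin 0 (Set.Ioi 0)) := by
    apply tendsto_nhdsWithin_of_tendsto_nhds_of_eventually_within
    · have : Filter.Tendsto Real.sqrt (nhds 0) (nhds 0) := by
        simpa using Real.continuous_sqrt.tendsto 0
      exact this.comp (hbase.mono_right nhdsWithin_le_nhds)
    · have hev : ∀ᶠ x in l, (4 - (x - B) ^ 2) ∈ Set.Ioi (0:ℝ) := hbase self_mem_nhdsWithin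
      filter_upwards [hev] with x hx
      exact Real.sqrt_pos.2 hx
  have hi_top : Filter.Tendsto i l Filter.atTop := by
    have := hsqrt.inv_tendsto_nhdsGT_zero
    exact this
  set R : ℝ → ℝ := fun x => ∑ j ∈ s.erase j₀, (w j : ℝ) * (Real.sqrt (4 - (x - a j) ^ 2))⁻¹
    with hR_def
  have hRpos : ∀ j ∈ s.erase j₀, 0 < 4 - ((B + 2) - a j) ^ 2 := by
    intro j hj
    have hjs := Finset.mem_of_mem_erase hj
    have hjne : j ≠ j₀ := Finset.ne_of_mem_erase hj
    have h1 : B ≤ a j := hj₀min j hjs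
    have h2 : a j ≠ B := fun h => hjne (ha h)
    have h3 : B < a j := lt_of_le_of_ne h1 (Ne.symm h2)
    have h4 : |E₀ - a j| < 2 := hI E₀ hE₀ j
    have h5 : |E₀ - B| < 2 := hI E₀ hE₀ j₀
    have h4' := abs_lt.1 h4
    have h5' := abs_lt.1 h5
    nlinarith [h4'.1, h4'.2, h5'.1, h5'.2]
  have hR_cont : Filter.Tendsto R l (nhds (R (B + 2))) := by
    have : ContinuousAt R (B + 2) := by
      apply tendsto_finset_sum
      intro j hj
      show ContinuousAt _ _
      have hu := hRpos j hj
      have hne : Real.sqrt (4 - ((B + 2) - a j) ^ 2) ≠ 0 := (Real.sqrt_pos.2 hu).ne'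
      exact continuousAt_const.mul
        (((Real.continuous_sqrt.continuousAt).comp (by fun_prop)).inv₀ hne)
    exact this.continuousWithinAt.tendsto
  -- split the sum
  have hsplit : ∀ x : ℝ, G x = (w j₀ : ℝ) * i x + R x := by
    intro x
    rw [hG_def, hR_def, hi_def]
    exact (Finset.add_sum_erase s _ hj₀s).symm
  have ht_eq : ∀ᶠ x in l, (w j₀ : ℝ) * i x = -R x := by
    filter_upwards [hG0'] with x hx
    have := hsplit x
    linarith [hx ▸ this]
  have ht_tendsto : Filter.Tendsto (fun x => (w j₀ : ℝ) * i x) l (nhds (-R (B + 2))) := by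
    apply Filter.Tendsto.congr' _ hR_cont.neg
    filter_upwards [ht_eq] with x hx
    exact hx.symm
  have habs_top : Filter.Tendsto (fun x => |(w j₀ : ℝ) * i x|) l Filter.atTop := by
    apply tendsto_atTop_mono _ hi_top
    intro x
    have hw1 : (1 : ℝ) ≤ |(w j₀ : ℝ)| := by
      have : w j₀ ≠ 0 := hws j₀ hj₀s
      exact_mod_cast Int.one_le_abs (by omega)
    have hix : 0 ≤ i x := by
      rw [hi_def]; positivity
    calc i x = 1 * i x := (one_mul _).symm
      _ ≤ |(w j₀ : ℝ)| * i x := by apply mul_le_mul_of_nonneg_right hw1 hix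
      _ = |(w j₀ : ℝ)| * |i x| := by rw [abs_of_nonneg hix]
      _ = |(w j₀ : ℝ) * i x| := (abs_mul _ _).symm
  exact not_tendsto_atTop_of_tendsto_nhds ht_tendsto.abs habs_top
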